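/- A set of D unit vectors {|ψ_j⟩}_{j=1}^D in a D-dimensional Hilbert space forms an orthonormal basis if and only if their generalized Bloch vectors {b_j} satisfy Σ_{j=1}^D b_j = 0 and b_j·b_k = (D δ_{jk} − 1)/(D−1) for all j,k. -/

import Mathlib

open scoped InnerProductSpace
open scoped Matrix

lemma trace_rho_mul {D : ℕ} (ψ : Fin D → EuclideanSpace ℂ (Fin D)) (j k : Fin D) :
    (Matrix.of (fun i i' => ψ j i * (starRingEnd ℂ) (ψ j i')) *
     Matrix.of (fun i i' => ψ k i * (starRingEnd ℂ) (ψ k i')) : Matrix (Fin D) (Fin D) ℂ).trace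
      = ⟪ψ j, ψ k⟫_ℂ * ⟪ψ k, ψ j⟫_ℂ := by
  simp only [Matrix.trace, Matrix.diag, Matrix.mul_apply, Matrix.of_apply,
    PiLp.inner_apply, RCLike.inner_apply]
  rw [Finset.sum_mul_sum, Finset.sum_comm]
  refine Finset.sum_congr rfl fun m _ => Finset.sum_congr rfl fun n _ => ?_
  ring

lemma trace_S {n m : ℕ} (γ : Fin n → Matrix (Fin m) (Fin m) ℂ)
    (htrace : ∀ i, (γ i).trace = 0) (u : EuclideanSpace ℝ (Fin n)) :
    ((∑ i, ((u i : ℝ) : ℂ) • (((Real.sqrt 2 : ℝ) : ℂ))⁻¹ • γ i)).trace = 0 := by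
  simp [Matrix.trace_sum, Matrix.trace_smul, htrace]

lemma trace_S_mul {n m : ℕ} (γ : Fin n → Matrix (Fin m) (Fin m) ℂ)
    (horth : ∀ i j, (γ i * γ j).trace = if i = j then 2 else 0)
    (u v : EuclideanSpace ℝ (Fin n)) :
    ((∑ i, ((u i : ℝ) : ℂ) • (((Real.sqrt 2 : ℝ) : ℂ))⁻¹ • γ i) *
     (∑ i, ((v i : ℝ) : ℂ) • (((Real.sqrt 2 : ℝ) : ℂ))⁻¹ • γ i)).trace
      = ((⟪u, v⟫_ℝ : ℝ) : ℂ) := by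
  have h2 : (((Real.sqrt 2 : ℝ) : ℂ))⁻¹ * (((Real.sqrt 2 : ℝ) : ℂ))⁻¹ * 2 = 1 := by
    rw [← mul_inv]
    norm_cast
    rw [show (Real.sqrt 2 * Real.sqrt 2) = 2 from Real.mul_self_sqrt (by norm_num)]
    norm_num
  rw [Matrix.sum_mul, Matrix.trace_sum]
  simp only [Matrix.mul_sum, Matrix.trace_sum, Matrix.smul_mul, Matrix.mul_smul,
    Matrix.trace_smul, smul_smul, smul_eq_mul, horth]
  simp only [mul_ite, mul_zero, Finset.sum_ite_eq, Finset.mem_univ, if_true]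
  simp only [PiLp.inner_apply, RCLike.inner_apply, starRingEnd_apply, star_trivial]
  push_cast
  refine Finset.sum_congr rfl fun i _ => ?_
  calc (v i : ℂ) * ((√2:ℝ):ℂ)⁻¹ * (↑(u i) * ((√2:ℝ):ℂ)⁻¹) * 2
      = (u i : ℂ) * (v i) * (((√2:ℝ):ℂ)⁻¹ * ((√2:ℝ):ℂ)⁻¹ * 2) := by ring
    _ = (u i : ℂ) * (v i) := by rw [h2]; ring
    _ = (v i : ℂ) * (u i) := by ring

lemma trace_bloch {D : ℕ} (hD : 2 ≤ D) {n : ℕ}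
    (γ : Fin n → Matrix (Fin D) (Fin D) ℂ)
    (htrace : ∀ i, (γ i).trace = 0)
    (horth : ∀ i j, (γ i * γ j).trace = if i = j then 2 else 0)
    (u v : EuclideanSpace ℝ (Fin n)) :
    ((((D : ℂ))⁻¹ • (1 : Matrix (Fin D) (Fin D) ℂ) +
        ((Real.sqrt (((D : ℝ) - 1) / D) : ℝ) : ℂ) •
          ∑ i, ((u i : ℝ) : ℂ) • (((Real.sqrt 2 : ℝ) : ℂ))⁻¹ • γ i) *
     (((D : ℂ))⁻¹ • (1 : Matrix (Fin D) (Fin D) ℂ) +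
        ((Real.sqrt (((D : ℝ) - 1) / D) : ℝ) : ℂ) •
          ∑ i, ((v i : ℝ) : ℂ) • (((Real.sqrt 2 : ℝ) : ℂ))⁻¹ • γ i)).trace
      = (D : ℂ)⁻¹ + (((((D : ℝ) - 1) / D : ℝ)) : ℂ) * ((⟪u, v⟫_ℝ : ℝ) : ℂ) := by
  have hD0 : (D : ℂ) ≠ 0 := Nat.cast_ne_zero.mpr (by omega)
  have hnn : (0:ℝ) ≤ ((D : ℝ) - 1) / D := by
    apply div_nonneg
    · have : (2:ℝ) ≤ D := by exact_mod_cast hD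
      linarith
    · positivity
  have hcc : ((Real.sqrt (((D : ℝ) - 1) / D) : ℝ) : ℂ) *
      ((Real.sqrt (((D : ℝ) - 1) / D) : ℝ) : ℂ) = (((((D : ℝ) - 1) / D : ℝ)) : ℂ) := by
    rw [← Complex.ofReal_mul, Real.mul_self_sqrt hnn]
  set c : ℂ := ((Real.sqrt (((D : ℝ) - 1) / D) : ℝ) : ℂ)
  set Su := ∑ i, ((u i : ℝ) : ℂ) • (((Real.sqrt 2 : ℝ) : ℂ))⁻¹ • γ i
  set Sv := ∑ i, ((v i : ℝ) : ℂ) • (((Real.sqrt 2 : ℝ) : ℂ))⁻¹ • γ i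
  have hSu : Su.trace = 0 := trace_S γ htrace u
  have hSv : Sv.trace = 0 := trace_S γ htrace v
  have hSuv : (Su * Sv).trace = ((⟪u, v⟫_ℝ : ℝ) : ℂ) := trace_S_mul γ horth u v
  rw [add_mul, mul_add, mul_add, Matrix.trace_add, Matrix.trace_add, Matrix.trace_add]
  simp only [Matrix.smul_mul, Matrix.mul_smul, Matrix.one_mul, Matrix.mul_one, smul_smul,
    Matrix.trace_smul, trace_S γ htrace u, trace_S γ htrace v, trace_S_mul γ horth u v,
    hSu, hSv, hSuv, Matrix.trace_one, smul_eq_mul, mul_zero, add_zero, zero_add]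
  rw [Fintype.card_fin, hcc]
  congr 1
  field_simp

lemma sum_rho {D : ℕ} (ψ : Fin D → EuclideanSpace ℂ (Fin D)) (h : Orthonormal ℂ ψ) :
    ∑ j, Matrix.of (fun i i' => ψ j i * (starRingEnd ℂ) (ψ j i')) =
      (1 : Matrix (Fin D) (Fin D) ℂ) := by
  rw [orthonormal_iff_ite] at h
  set U : Matrix (Fin D) (Fin D) ℂ := Matrix.of (fun i j => ψ j i) with hUdef
  have hU : Uᴴ * U = 1 := by
    ext j k
    simp only [Matrix.mul_apply, Matrix.conjTranspose_apply, Matrix.of_apply, hUdef,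
      Matrix.one_apply]
    rw [← h j k]
    simp [PiLp.inner_apply, RCLike.inner_apply, mul_comm]
  have hU' : U * Uᴴ = 1 := mul_eq_one_comm.mp hU
  ext i i'
  rw [← hU']
  simp [Matrix.sum_apply, Matrix.mul_apply, Matrix.conjTranspose_apply, hUdef,
    Finset.mul_sum]

/-- D unit vectors form an orthonormal basis iff their Bloch vectors sum to zero
and have the pairwise inner products of a regular simplex. -/
theorem stmt_2 (D : ℕ) (hD : 2 ≤ D)
    (γ : Fin (D ^ 2 - 1) → Matrix (Fin D) (Fin D) ℂ)
    (hherm : ∀ i, (γ i).IsHermitian)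
    (htrace : ∀ i, (γ i).trace = 0)
    (horth : ∀ i j, (γ i * γ j).trace = if i = j then 2 else 0)
    (ψ : Fin D → EuclideanSpace ℂ (Fin D))
    (hψ : ∀ j, ‖ψ j‖ = 1)
    (b : Fin D → EuclideanSpace ℝ (Fin (D ^ 2 - 1)))
    (hb : ∀ j, Matrix.of (fun i i' => ψ j i * (starRingEnd ℂ) (ψ j i')) =
      ((D : ℂ))⁻¹ • (1 : Matrix (Fin D) (Fin D) ℂ) +
        ((Real.sqrt (((D : ℝ) - 1) / D) : ℝ) : ℂ) •
          ∑ i, ((b j i : ℝ) : ℂ) • (((Real.sqrt 2 : ℝ) : ℂ))⁻¹ • γ i) :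
    Orthonormal ℂ ψ ↔
      (∑ j, b j = 0 ∧
        ∀ j k, ⟪b j, b k⟫_ℝ =
          ((D : ℝ) * (if j = k then 1 else 0) - 1) / ((D : ℝ) - 1)) := by
  have hDr : (D : ℝ) ≠ 0 := Nat.cast_ne_zero.mpr (by omega)
  have hD2 : (2:ℝ) ≤ (D:ℝ) := by exact_mod_cast hD
  have hD1 : (D : ℝ) - 1 ≠ 0 := by linarith
  -- key trace identity
  have key : ∀ j k, ⟪ψ j, ψ k⟫_ℂ * ⟪ψ k, ψ j⟫_ℂ
      = (D : ℂ)⁻¹ + (((((D : ℝ) - 1) / D : ℝ)) : ℂ) * ((⟪b j, b k⟫_ℝ : ℝ) : ℂ) := by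
    intro j k
    rw [← trace_rho_mul ψ j k, hb j, hb k, trace_bloch hD γ htrace horth (b j) (b k)]
  have hD0c : (D : ℂ) ≠ 0 := Nat.cast_ne_zero.mpr (by omega)
  have hD1c : (D : ℂ) - 1 ≠ 0 := by
    intro hc
    apply hD1
    have : ((D:ℝ) - 1 : ℝ) = ((0:ℝ)) := by
      have := congrArg Complex.re hc
      simpa using this
    linarith [this]
  constructor
  · intro h
    have hite := orthonormal_iff_ite.mp h
    refine ⟨?_, ?_⟩
    · -- sum of bloch vectors is zero
      have h1 : (∑ j, Matrix.of (fun i i' => ψ j i * (starRingEnd ℂ) (ψ j i'))) =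
          ∑ j, (((D : ℂ))⁻¹ • (1 : Matrix (Fin D) (Fin D) ℂ) +
            ((Real.sqrt (((D : ℝ) - 1) / D) : ℝ) : ℂ) •
              ∑ i, ((b j i : ℝ) : ℂ) • (((Real.sqrt 2 : ℝ) : ℂ))⁻¹ • γ i) :=
        Finset.sum_congr rfl fun j _ => hb j
      rw [sum_rho ψ h, Finset.sum_add_distrib, Finset.sum_const, Finset.card_univ,
        Fintype.card_fin, ← Finset.smul_sum] at h1
      have hDn : (D : ℕ) • ((D : ℂ)⁻¹ • (1 : Matrix (Fin D) (Fin D) ℂ)) = 1 := by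
        rw [← Nat.cast_smul_eq_nsmul ℂ, smul_smul,
          mul_inv_cancel₀ hD0c, one_smul]
      rw [hDn] at h1
      have h2 : ((Real.sqrt (((D : ℝ) - 1) / D) : ℝ) : ℂ) •
          (∑ j, ∑ i, ((b j i : ℝ) : ℂ) • (((Real.sqrt 2 : ℝ) : ℂ))⁻¹ • γ i) = 0 := by
        have := h1.symm
        rwa [add_eq_left] at this
      have hcne : ((Real.sqrt (((D : ℝ) - 1) / D) : ℝ) : ℂ) ≠ 0 := by
        simp only [ne_eq, Complex.ofReal_eq_zero]
        refine (Real.sqrt_ne_zero ?_).mpr ?_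
        · apply div_nonneg <;> linarith
        · apply div_ne_zero <;> [skip; exact hDr]
          linarith
      have hM : (∑ j, ∑ i, ((b j i : ℝ) : ℂ) • (((Real.sqrt 2 : ℝ) : ℂ))⁻¹ • γ i) = 0 :=
        (smul_eq_zero.mp h2).resolve_left hcne
      have hswap : ∑ i, (((∑ j, b j i : ℝ)) : ℂ) • (((Real.sqrt 2 : ℝ) : ℂ))⁻¹ • γ i = 0 := by
        rw [← hM, Finset.sum_comm]
        refine Finset.sum_congr rfl fun i _ => ?_
        rw [Complex.ofReal_sum, Finset.sum_smul]
      have hzero : ∀ i0, (∑ j, b j i0) = (0 : ℝ) := by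
        intro i0
        have ht := congrArg (fun M => (M * γ i0).trace) hswap
        simp only [Matrix.zero_mul, Matrix.trace_zero, Matrix.sum_mul, Matrix.smul_mul,
          Matrix.trace_sum, Matrix.trace_smul, horth, smul_eq_mul, mul_ite, mul_zero,
          Finset.sum_ite_eq', Finset.mem_univ, if_true] at ht
        have hsne : (((Real.sqrt 2 : ℝ) : ℂ))⁻¹ * 2 ≠ 0 := by
          apply mul_ne_zero
          · simp only [ne_eq, inv_eq_zero, Complex.ofReal_eq_zero]
            positivity
          · norm_num
        have := (mul_eq_zero.mp ht).resolve_right hsne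
        exact_mod_cast this
      ext i0
      simpa using hzero i0
    · intro j k
      have h' := key j k
      rw [hite j k, hite k j] at h'
      have hr : (if j = k then (1:ℝ) else 0) = (D:ℝ)⁻¹ + (((D:ℝ) - 1) / D) * ⟪b j, b k⟫_ℝ := by
        apply Complex.ofReal_injective
        rw [Complex.ofReal_add, Complex.ofReal_mul, Complex.ofReal_inv, Complex.ofReal_natCast,
          ← h']
        by_cases hjk : j = k
        · simp [hjk]
        · simp [hjk, Ne.symm hjk]
      set t : ℝ := if j = k then (1:ℝ) else 0 with ht
      have h3 : ⟪b j, b k⟫_ℝ * (((D:ℝ) - 1) / D) = t - (D:ℝ)⁻¹ := by linarith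
      have h4 : ⟪b j, b k⟫_ℝ = (t - (D:ℝ)⁻¹) / (((D:ℝ) - 1) / D) :=
        eq_div_of_mul_eq (div_ne_zero hD1 hDr) h3
      rw [h4]
      field_simp
  · rintro ⟨-, hip⟩
    rw [orthonormal_iff_ite]
    intro j k
    by_cases hjk : j = k
    · subst hjk
      simp only [if_true]
      rw [inner_self_eq_norm_sq_to_K, hψ j]
      norm_num
    · simp only [hjk, if_false]
      have hk := key j k
      rw [hip j k] at hk
      simp only [hjk, if_false] at hk
      have hz : ⟪ψ j, ψ k⟫_ℂ * ⟪ψ k, ψ j⟫_ℂ = 0 := by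
        rw [hk]
        push_cast
        field_simp
        ring
      rcases mul_eq_zero.mp hz with h0 | h0
      · exact h0
      · rw [← inner_conj_symm] at h0
        exact star_eq_zero.mp h0
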